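/- Let A ∈ ℝ^{n×n} be SPD, M ∈ ℝ^{n×n} nonsingular with M + Mᵀ − A SPD, P ∈ ℝ^{n×n_c} of full column rank, A_c := PᵀAP, and B_c ∈ ℝ^{n_c×n_c} SPD such that B_c − A_c is symmetric positive semidefinite. Then the inexact two-grid iteration matrix E_ITG = (I−M^{-T}A)(I−P B_c^{-1}PᵀA)(I−M^{-1}A) satisfies ‖E_ITG‖_A ≥ 1 − 1/K_TG, where K_TG := max_{v≠0} ‖(I−Π_M̃)v‖²_M̃/‖v‖²_A with M̃ := Mᵀ(M+Mᵀ−A)^{-1}M and Π_M̃ := P(PᵀM̃P)^{-1}PᵀM̃; that is, the inexact two-grid method converges no faster than the exact two-grid method. -/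

import Mathlib

open Matrix

set_option maxHeartbeats 1600000

/-- Energy norm induced by a matrix `G`: `‖v‖_G = ⟨G v, v⟩^{1/2}`. -/
noncomputable def enorm {m : Type*} [Fintype m] (G : Matrix m m ℝ) (v : m → ℝ) : ℝ :=
  Real.sqrt (v ⬝ᵥ (G *ᵥ v))

section helpers
variable {m : Type*} [Fintype m]

lemma qf_pos {A : Matrix m m ℝ} (hA : A.PosDef) {v : m → ℝ} (hv : v ≠ 0) :
    0 < v ⬝ᵥ A *ᵥ v := by simpa using hA.dotProduct_mulVec_pos hv

lemma qf_nonneg {A : Matrix m m ℝ} (hA : A.PosSemidef) (v : m → ℝ) :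
    0 ≤ v ⬝ᵥ A *ᵥ v := by simpa using hA.dotProduct_mulVec_nonneg v

omit [Fintype m] in
lemma tr_eq {A : Matrix m m ℝ} (hA : A.IsHermitian) : Aᵀ = A := by
  rw [← Matrix.conjTranspose_eq_transpose_of_trivial]; exact hA

lemma qf_symm {A : Matrix m m ℝ} (hA : Aᵀ = A) (x y : m → ℝ) :
    x ⬝ᵥ A *ᵥ y = y ⬝ᵥ A *ᵥ x := by
  rw [Matrix.dotProduct_mulVec, ← Matrix.mulVec_transpose, hA, dotProduct_comm]

lemma dot3 {k l : Type*} [Fintype k] [Fintype l]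
    (B : Matrix l m ℝ) (W : Matrix l l ℝ) (C : Matrix l k ℝ) (x : m → ℝ) (y : k → ℝ) :
    x ⬝ᵥ (Bᵀ * W * C) *ᵥ y = (B *ᵥ x) ⬝ᵥ W *ᵥ (C *ᵥ y) := by
  rw [Matrix.mul_assoc, ← Matrix.mulVec_mulVec, Matrix.dotProduct_mulVec,
    Matrix.vecMul_transpose, ← Matrix.mulVec_mulVec]

lemma dot_shift {k : Type*} [Fintype k] (B : Matrix m k ℝ) (x : m → ℝ) (y : k → ℝ) :
    x ⬝ᵥ B *ᵥ y = (Bᵀ *ᵥ x) ⬝ᵥ y := by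
  rw [Matrix.dotProduct_mulVec, ← Matrix.mulVec_transpose]

lemma qf_expand {A : Matrix m m ℝ} (hA : Aᵀ = A) (x y : m → ℝ) (s t : ℝ) :
    (s • x + t • y) ⬝ᵥ A *ᵥ (s • x + t • y)
      = s^2 * (x ⬝ᵥ A *ᵥ x) + 2*(s*t)*(x ⬝ᵥ A *ᵥ y) + t^2 * (y ⬝ᵥ A *ᵥ y) := by
  have h := qf_symm hA y x
  simp only [Matrix.mulVec_add, Matrix.mulVec_smul, dotProduct_add,
    add_dotProduct, smul_dotProduct, dotProduct_smul, smul_eq_mul, h]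
  ring

lemma cs_pd {A : Matrix m m ℝ} (hA : A.PosDef) (x y : m → ℝ) :
    (x ⬝ᵥ A *ᵥ y)^2 ≤ (x ⬝ᵥ A *ᵥ x) * (y ⬝ᵥ A *ᵥ y) := by
  by_cases hy : y = 0
  · subst hy; simp
  · have hsym : Aᵀ = A := tr_eq hA.1
    have hc := qf_pos hA hy
    have h := qf_expand hsym x y (y ⬝ᵥ A *ᵥ y) (-(x ⬝ᵥ A *ᵥ y))
    have h0 : 0 ≤ (((y ⬝ᵥ A *ᵥ y) • x + (-(x ⬝ᵥ A *ᵥ y)) • y) ⬝ᵥ A *ᵥ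
        (((y ⬝ᵥ A *ᵥ y)) • x + (-(x ⬝ᵥ A *ᵥ y)) • y)) := qf_nonneg hA.posSemidef _
    rw [h] at h0
    nlinarith [hc, h0]

lemma enorm_sq {A : Matrix m m ℝ} (hA : A.PosSemidef) (v : m → ℝ) :
    enorm A v ^ 2 = v ⬝ᵥ A *ᵥ v := Real.sq_sqrt (qf_nonneg hA v)

end helpers

theorem stmt_19 {n nc : ℕ} (hnc : nc < n)
    (A M : Matrix (Fin n) (Fin n) ℝ)
    (P : Matrix (Fin n) (Fin nc) ℝ)
    (Bc : Matrix (Fin nc) (Fin nc) ℝ)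
    (hA : A.PosDef) (hM : IsUnit M.det)
    (hMMA : (M + Mᵀ - A).PosDef)
    (hP : P.rank = nc)
    (hBc : Bc.PosDef)
    (Ac : Matrix (Fin nc) (Fin nc) ℝ) (hAc : Ac = Pᵀ * A * P)
    (hBcAc : (Bc - Ac).PosSemidef)
    (E : Matrix (Fin n) (Fin n) ℝ)
    (hE : E = (1 - Mᵀ⁻¹ * A) * (1 - P * Bc⁻¹ * Pᵀ * A) * (1 - M⁻¹ * A))
    (Mtil : Matrix (Fin n) (Fin n) ℝ)
    (hMtil : Mtil = Mᵀ * (M + Mᵀ - A)⁻¹ * M)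
    (Pi : Matrix (Fin n) (Fin n) ℝ) (hPi : Pi = P * (Pᵀ * Mtil * P)⁻¹ * Pᵀ * Mtil)
    (KTG : ℝ)
    (hK : IsGreatest {r : ℝ | ∃ v : Fin n → ℝ, v ≠ 0 ∧
        r = (enorm Mtil ((1 - Pi) *ᵥ v)) ^ 2 / (enorm A v) ^ 2} KTG)
    (normE : ℝ)
    (hnormE : IsGreatest {r : ℝ | ∃ v : Fin n → ℝ, v ≠ 0 ∧
        r = enorm A (E *ᵥ v) / enorm A v} normE) :
    normE ≥ 1 - 1 / KTG := by
  classical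
  by_cases hcase : 1 - 1/KTG ≤ 0
  · obtain ⟨v₁, hv₁, hr₁⟩ := hnormE.1
    have h0 : (0:ℝ) ≤ normE := by
      rw [hr₁]
      exact div_nonneg (Real.sqrt_nonneg _) (Real.sqrt_nonneg _)
    linarith
  push_neg at hcase
  -- basic facts
  have hAt : Aᵀ = A := tr_eq hA.1
  have hAdet : IsUnit A.det := hA.det_pos.ne'.isUnit
  have hNdet : IsUnit (M + Mᵀ - A).det := hMMA.det_pos.ne'.isUnit
  have hMt : IsUnit Mᵀ.det := Matrix.isUnit_det_transpose M hM
  have hNt : (M + Mᵀ - A)ᵀ = (M + Mᵀ - A) := tr_eq hMMA.1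
  have hNinvT : ((M + Mᵀ - A)⁻¹)ᵀ = (M + Mᵀ - A)⁻¹ := by
    rw [Matrix.transpose_nonsing_inv, hNt]
  have hMtilT : Mtilᵀ = Mtil := by
    rw [hMtil, Matrix.transpose_mul, Matrix.transpose_mul, Matrix.transpose_transpose,
      hNinvT, Matrix.mul_assoc]
  have hMinj : Function.Injective (M.mulVec) :=
    Matrix.mulVec_injective_iff_isUnit.mpr ((Matrix.isUnit_iff_isUnit_det M).2 hM)
  have hMtilPD : Mtil.PosDef := by
    refine Matrix.PosDef.of_dotProduct_mulVec_pos ?_ ?_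
    · rw [Matrix.IsHermitian, Matrix.conjTranspose_eq_transpose_of_trivial, hMtilT]
    · intro x hx
      have hMx : M *ᵥ x ≠ 0 := fun h0 => hx (hMinj (by simpa using h0))
      have h1 : x ⬝ᵥ Mtil *ᵥ x = (M *ᵥ x) ⬝ᵥ (M + Mᵀ - A)⁻¹ *ᵥ (M *ᵥ x) := by
        rw [hMtil, dot3]
      simpa [h1] using qf_pos hMMA.inv hMx
  -- injectivity of P
  have hPinj : ∀ x : Fin nc → ℝ, x ≠ 0 → P *ᵥ x ≠ 0 := by
    have hrank : Module.finrank ℝ (LinearMap.range P.mulVecLin) = nc := hP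
    have h2 := LinearMap.finrank_range_add_finrank_ker P.mulVecLin
    rw [hrank] at h2
    have h3 : Module.finrank ℝ (Fin nc → ℝ) = nc := by simp
    rw [h3] at h2
    have hker : LinearMap.ker P.mulVecLin = ⊥ :=
      Submodule.finrank_eq_zero.mp (by omega)
    intro x hx h0
    exact hx (LinearMap.ker_eq_bot.mp hker (by simpa using h0))
  have hGPD : (Pᵀ * Mtil * P).PosDef := by
    refine Matrix.PosDef.of_dotProduct_mulVec_pos ?_ ?_
    · rw [Matrix.IsHermitian, Matrix.conjTranspose_eq_transpose_of_trivial,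
        Matrix.transpose_mul, Matrix.transpose_mul, Matrix.transpose_transpose, hMtilT,
        Matrix.mul_assoc]
    · intro x hx
      have h1 : x ⬝ᵥ (Pᵀ * Mtil * P) *ᵥ x = (P *ᵥ x) ⬝ᵥ Mtil *ᵥ (P *ᵥ x) := dot3 P Mtil P x x
      simpa [h1] using qf_pos hMtilPD (hPinj x hx)
  have hAcPD : Ac.PosDef := by
    rw [hAc]
    refine Matrix.PosDef.of_dotProduct_mulVec_pos ?_ ?_
    · rw [Matrix.IsHermitian, Matrix.conjTranspose_eq_transpose_of_trivial,
        Matrix.transpose_mul, Matrix.transpose_mul, Matrix.transpose_transpose, hAt,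
        Matrix.mul_assoc]
    · intro x hx
      have h1 : x ⬝ᵥ (Pᵀ * A * P) *ᵥ x = (P *ᵥ x) ⬝ᵥ A *ᵥ (P *ᵥ x) := dot3 P A P x x
      simpa [h1] using qf_pos hA (hPinj x hx)
  have hGdet : IsUnit (Pᵀ * Mtil * P).det := hGPD.det_pos.ne'.isUnit
  have hAcdet : IsUnit Ac.det := hAcPD.det_pos.ne'.isUnit
  have hBcdet : IsUnit Bc.det := hBc.det_pos.ne'.isUnit
  -- KTG attained
  obtain ⟨v₀, hv₀, hKval⟩ := hK.1
  have hqa0 : 0 < v₀ ⬝ᵥ A *ᵥ v₀ := qf_pos hA hv₀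
  have hKnonneg : 0 ≤ KTG := by rw [hKval]; positivity
  have hKpos : 0 < KTG := by
    rcases hKnonneg.lt_or_eq with h | h
    · exact h
    exfalso
    have hall : ∀ v : Fin n → ℝ, (1 - Pi) *ᵥ v = 0 := by
      intro v
      by_cases hv : v = 0
      · simp [hv]
      have hub := hK.2 ⟨v, hv, rfl⟩
      rw [← h] at hub
      have hnn : 0 ≤ (enorm Mtil ((1 - Pi) *ᵥ v)) ^ 2 / (enorm A v) ^ 2 := by positivity
      have heq : (enorm Mtil ((1 - Pi) *ᵥ v)) ^ 2 / (enorm A v) ^ 2 = 0 := le_antisymm hub hnn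
      have hden : (enorm A v) ^ 2 ≠ 0 := by
        rw [enorm_sq hA.posSemidef]; exact (qf_pos hA hv).ne'
      have hnum : (enorm Mtil ((1 - Pi) *ᵥ v)) ^ 2 = 0 := by
        rcases div_eq_zero_iff.mp heq with h' | h'
        · exact h'
        · exact absurd h' hden
      rw [enorm_sq hMtilPD.posSemidef] at hnum
      by_contra hw
      exact (qf_pos hMtilPD hw).ne' hnum
    have hsurj : ∀ v : Fin n → ℝ, v ∈ LinearMap.range P.mulVecLin := by
      intro v
      have h1 : v = Pi *ᵥ v := by
        have := hall v
        rw [Matrix.sub_mulVec, Matrix.one_mulVec, sub_eq_zero] at this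
        exact this
      refine ⟨((Pᵀ * Mtil * P)⁻¹ * Pᵀ * Mtil) *ᵥ v, ?_⟩
      rw [Matrix.mulVecLin_apply, Matrix.mulVec_mulVec, ← Matrix.mul_assoc, ← Matrix.mul_assoc,
        ← hPi]
      exact h1.symm
    have htop : LinearMap.range P.mulVecLin = ⊤ := by
      rw [Submodule.eq_top_iff']; exact hsurj
    have hrank : Module.finrank ℝ (LinearMap.range P.mulVecLin) = nc := hP
    rw [htop, finrank_top] at hrank
    simp at hrank
    omega
  set w₀ : Fin n → ℝ := (1 - Pi) *ᵥ v₀ with hw₀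
  have hKq : KTG * (v₀ ⬝ᵥ A *ᵥ v₀) = w₀ ⬝ᵥ Mtil *ᵥ w₀ := by
    have h1 : (enorm A v₀)^2 = v₀ ⬝ᵥ A *ᵥ v₀ := enorm_sq hA.posSemidef v₀
    have h2 : (enorm Mtil w₀)^2 = w₀ ⬝ᵥ Mtil *ᵥ w₀ := enorm_sq hMtilPD.posSemidef w₀
    rw [hKval, h1, h2, div_mul_cancel₀ _ hqa0.ne']
  set qa := v₀ ⬝ᵥ A *ᵥ v₀ with hqa
  set mm := w₀ ⬝ᵥ Mtil *ᵥ w₀ with hmm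
  have hmpos : 0 < mm := by rw [← hKq]; exact mul_pos hKpos hqa0
  -- Pᵀ Mtil w₀ = 0
  have hmat0 : Pᵀ * Mtil * Pi = Pᵀ * Mtil := by
    rw [hPi, show Pᵀ * Mtil * (P * (Pᵀ*Mtil*P)⁻¹ * Pᵀ * Mtil)
        = (Pᵀ*Mtil*P) * (Pᵀ*Mtil*P)⁻¹ * (Pᵀ*Mtil) from by simp only [Matrix.mul_assoc],
      Matrix.mul_nonsing_inv _ hGdet, Matrix.one_mul]
  have hPMw : Pᵀ *ᵥ (Mtil *ᵥ w₀) = 0 := by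
    rw [hw₀, Matrix.mulVec_mulVec, Matrix.mulVec_mulVec,
      show Pᵀ * Mtil * (1 - Pi) = 0 from by rw [Matrix.mul_sub, Matrix.mul_one, hmat0, sub_self],
      Matrix.zero_mulVec]
  -- u
  set u : Fin n → ℝ := A⁻¹ *ᵥ (Mtil *ᵥ w₀) with hu
  have hAu : A *ᵥ u = Mtil *ᵥ w₀ := by
    rw [hu, Matrix.mulVec_mulVec, Matrix.mul_nonsing_inv _ hAdet, Matrix.one_mulVec]
  have hu0 : u ≠ 0 := by
    intro h0
    have hz : Mtil *ᵥ w₀ = 0 := by rw [← hAu, h0, Matrix.mulVec_zero]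
    rw [hmm, hz] at hmpos
    simp at hmpos
  set a := u ⬝ᵥ A *ᵥ u with ha
  have hapos : 0 < a := qf_pos hA hu0
  have hPAu : Pᵀ *ᵥ (A *ᵥ u) = 0 := by rw [hAu]; exact hPMw
  -- u ⬝ᵥ A v₀ = mm
  have hPiv : w₀ ⬝ᵥ Mtil *ᵥ (Pi *ᵥ v₀) = 0 := by
    rw [show Pi *ᵥ v₀ = P *ᵥ (((Pᵀ * Mtil * P)⁻¹ * Pᵀ * Mtil) *ᵥ v₀) from by
        rw [Matrix.mulVec_mulVec, ← Matrix.mul_assoc, ← Matrix.mul_assoc, ← hPi],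
      Matrix.mulVec_mulVec, dot_shift, Matrix.transpose_mul, hMtilT,
      ← Matrix.mulVec_mulVec, hPMw, zero_dotProduct]
  have hm_alt : u ⬝ᵥ A *ᵥ v₀ = mm := by
    have h1 : u ⬝ᵥ A *ᵥ v₀ = v₀ ⬝ᵥ A *ᵥ u := qf_symm hAt u v₀
    have h2 : v₀ ⬝ᵥ A *ᵥ u = v₀ ⬝ᵥ Mtil *ᵥ w₀ := by rw [hAu]
    have h3 : v₀ ⬝ᵥ Mtil *ᵥ w₀ = w₀ ⬝ᵥ Mtil *ᵥ v₀ := qf_symm hMtilT v₀ w₀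
    have h4 : mm = w₀ ⬝ᵥ Mtil *ᵥ v₀ := by
      have e1 : Mtil *ᵥ w₀ = Mtil *ᵥ v₀ - Mtil *ᵥ (Pi *ᵥ v₀) := by
        rw [hw₀, Matrix.sub_mulVec, Matrix.one_mulVec, Matrix.mulVec_sub]
      rw [hmm, e1, dotProduct_sub, hPiv, sub_zero]
    rw [h1, h2, h3, ← h4]
  -- Cauchy-Schwarz: KTG * mm ≤ a
  have hma : KTG * mm ≤ a := by
    have hcs0 := cs_pd hA u v₀
    rw [hm_alt] at hcs0
    -- mm^2 ≤ a * qa, and KTG * qa = mm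
    nlinarith [hKq, hcs0, hqa0, hKpos]
  -- M-tilde inverse identities
  have hJeq : M⁻¹ * (M + Mᵀ - A) * Mᵀ⁻¹ = Mᵀ⁻¹ + M⁻¹ - M⁻¹ * A * Mᵀ⁻¹ := by
    rw [show M⁻¹ * (M + Mᵀ - A) = 1 + M⁻¹*Mᵀ - M⁻¹*A from by
        rw [Matrix.mul_sub, Matrix.mul_add, Matrix.nonsing_inv_mul _ hM],
      Matrix.sub_mul, Matrix.add_mul, Matrix.one_mul, Matrix.mul_assoc M⁻¹ Mᵀ Mᵀ⁻¹,
      Matrix.mul_nonsing_inv _ hMt, Matrix.mul_one]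
  have hMJ : Mtil * (M⁻¹ * (M + Mᵀ - A) * Mᵀ⁻¹) = 1 := by
    rw [hMtil]
    have c1 : M * (M⁻¹ * ((M + Mᵀ - A) * Mᵀ⁻¹)) = (M + Mᵀ - A) * Mᵀ⁻¹ := by
      rw [← Matrix.mul_assoc, Matrix.mul_nonsing_inv _ hM, Matrix.one_mul]
    have c2 : (M + Mᵀ - A)⁻¹ * ((M + Mᵀ - A) * Mᵀ⁻¹) = Mᵀ⁻¹ := by
      rw [← Matrix.mul_assoc, Matrix.nonsing_inv_mul _ hNdet, Matrix.one_mul]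
    calc Mᵀ * (M + Mᵀ - A)⁻¹ * M * (M⁻¹ * (M + Mᵀ - A) * Mᵀ⁻¹)
        = Mᵀ * ((M + Mᵀ - A)⁻¹ * (M * (M⁻¹ * ((M + Mᵀ - A) * Mᵀ⁻¹)))) := by
          simp only [Matrix.mul_assoc]
      _ = Mᵀ * Mᵀ⁻¹ := by rw [c1, c2]
      _ = 1 := Matrix.mul_nonsing_inv _ hMt
  have hAJA : u ⬝ᵥ (A * (M⁻¹ * (M + Mᵀ - A) * Mᵀ⁻¹) * A) *ᵥ u = mm := by
    rw [show A * (M⁻¹ * (M + Mᵀ - A) * Mᵀ⁻¹) * A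
        = Aᵀ * (M⁻¹ * (M + Mᵀ - A) * Mᵀ⁻¹) * A from by rw [hAt], dot3, hAu,
      show (Mtil *ᵥ w₀) ⬝ᵥ (M⁻¹ * (M + Mᵀ - A) * Mᵀ⁻¹) *ᵥ (Mtil *ᵥ w₀)
        = w₀ ⬝ᵥ (Mtilᵀ * (M⁻¹ * (M + Mᵀ - A) * Mᵀ⁻¹) * Mtil) *ᵥ w₀ from (dot3 _ _ _ _ _).symm,
      hMtilT,
      show Mtil * (M⁻¹ * (M + Mᵀ - A) * Mᵀ⁻¹) * Mtil = Mtil from by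
        rw [hMJ, Matrix.one_mul]]
  -- the test vector vv
  have hYT : (1 - Mᵀ⁻¹*A)ᵀ = 1 - A*M⁻¹ := by
    rw [Matrix.transpose_sub, Matrix.transpose_one, Matrix.transpose_mul, hAt,
      ← Matrix.transpose_nonsing_inv, Matrix.transpose_transpose]
  have hYAY : (1 - Mᵀ⁻¹*A)ᵀ * A * (1 - Mᵀ⁻¹*A)
      = A - A * (M⁻¹ * (M + Mᵀ - A) * Mᵀ⁻¹) * A := by
    rw [hYT, hJeq]; noncomm_ring
  set vv : Fin n → ℝ := (1 - Mᵀ⁻¹*A) *ᵥ u with hvv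
  have hs : vv ⬝ᵥ A *ᵥ vv = a - mm := by
    have hd := dot3 (1 - Mᵀ⁻¹*A) A (1 - Mᵀ⁻¹*A) u u
    rw [hYAY] at hd
    rw [hvv, ← hd, Matrix.sub_mulVec, dotProduct_sub, hAJA, ha]
  have hdivK : mm ≤ a / KTG := by
    rw [le_div_iff₀ hKpos]
    nlinarith [hma]
  have hs_lb : (1 - 1/KTG) * a ≤ vv ⬝ᵥ A *ᵥ vv := by
    rw [hs]
    have e : (1 - 1/KTG) * a = a - a/KTG := by field_simp
    rw [e]
    linarith
  have hspos : 0 < vv ⬝ᵥ A *ᵥ vv := lt_of_lt_of_le (mul_pos hcase hapos) hs_lb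
  have hvv0 : vv ≠ 0 := by
    intro h0
    rw [h0] at hspos
    simp at hspos
  -- the E identity
  have hXT : (1 - M⁻¹*A)ᵀ = 1 - A*Mᵀ⁻¹ := by
    rw [Matrix.transpose_sub, Matrix.transpose_one, Matrix.transpose_mul, hAt,
      Matrix.transpose_nonsing_inv]
  have hmulY : A * (1 - Mᵀ⁻¹*A) = (1 - A*Mᵀ⁻¹) * A := by
    rw [Matrix.mul_sub, Matrix.sub_mul, Matrix.mul_one, Matrix.one_mul, Matrix.mul_assoc]
  have hAC : A * (1 - P*Bc⁻¹*Pᵀ*A) = A - A*P*Bc⁻¹*Pᵀ*A := by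
    rw [Matrix.mul_sub, Matrix.mul_one]; simp only [Matrix.mul_assoc]
  have hAE : A * E = (1 - M⁻¹*A)ᵀ * (A - A*P*Bc⁻¹*Pᵀ*A) * (1 - M⁻¹*A) := by
    calc A * E
        = (A * (1 - Mᵀ⁻¹*A)) * ((1 - P*Bc⁻¹*Pᵀ*A) * (1 - M⁻¹*A)) := by
          rw [hE]; simp only [Matrix.mul_assoc]
      _ = ((1 - A*Mᵀ⁻¹) * (A * (1 - P*Bc⁻¹*Pᵀ*A))) * (1 - M⁻¹*A) := by
          rw [hmulY]; simp only [Matrix.mul_assoc]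
      _ = (1 - A*Mᵀ⁻¹) * (A - A*P*Bc⁻¹*Pᵀ*A) * (1 - M⁻¹*A) := by
          rw [hAC]
      _ = (1 - M⁻¹*A)ᵀ * (A - A*P*Bc⁻¹*Pᵀ*A) * (1 - M⁻¹*A) := by rw [hXT]
  set y : Fin n → ℝ := (1 - M⁻¹*A) *ᵥ vv with hy
  have ht : vv ⬝ᵥ A *ᵥ (E *ᵥ vv) = y ⬝ᵥ (A - A*P*Bc⁻¹*Pᵀ*A) *ᵥ y := by
    rw [Matrix.mulVec_mulVec, hAE, dot3, hy]
  -- sandwich identities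
  have hsand : ∀ (W : Matrix (Fin nc) (Fin nc) ℝ) (x1 x2 : Fin n → ℝ),
      x1 ⬝ᵥ (A*P*W*Pᵀ*A) *ᵥ x2 = ((Pᵀ*A) *ᵥ x1) ⬝ᵥ W *ᵥ ((Pᵀ*A) *ᵥ x2) := by
    intro W x1 x2
    rw [show A*P*W*Pᵀ*A = (Pᵀ*A)ᵀ * W * (Pᵀ*A) from by
        rw [Matrix.transpose_mul, Matrix.transpose_transpose, hAt]
        simp only [Matrix.mul_assoc],
      dot3]
  -- Bc⁻¹ ≼ Ac⁻¹
  have hBcT : Bcᵀ = Bc := tr_eq hBc.1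
  have hAcT : Acᵀ = Ac := tr_eq hAcPD.1
  have hmono : ∀ zz : Fin nc → ℝ, zz ⬝ᵥ Bc⁻¹ *ᵥ zz ≤ zz ⬝ᵥ Ac⁻¹ *ᵥ zz := by
    intro zz
    set x : Fin nc → ℝ := Bc⁻¹ *ᵥ zz with hx
    set x' : Fin nc → ℝ := Ac⁻¹ *ᵥ zz with hx'
    have hBx : Bc *ᵥ x = zz := by
      rw [hx, Matrix.mulVec_mulVec, Matrix.mul_nonsing_inv _ hBcdet, Matrix.one_mulVec]
    have hAx' : Ac *ᵥ x' = zz := by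
      rw [hx', Matrix.mulVec_mulVec, Matrix.mul_nonsing_inv _ hAcdet, Matrix.one_mulVec]
    have h5 : x ⬝ᵥ Ac *ᵥ x ≤ x ⬝ᵥ Bc *ᵥ x := by
      have hq := qf_nonneg hBcAc x
      rw [Matrix.sub_mulVec, dotProduct_sub] at hq
      linarith
    have h4 : 0 ≤ (x - x') ⬝ᵥ Ac *ᵥ (x - x') := qf_nonneg hAcPD.posSemidef _
    rw [Matrix.mulVec_sub, sub_dotProduct, dotProduct_sub,
      dotProduct_sub, hAx'] at h4
    have e1 : x' ⬝ᵥ Ac *ᵥ x = x ⬝ᵥ Ac *ᵥ x' := qf_symm hAcT x' x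
    rw [e1, hAx'] at h4
    -- h4 : 0 ≤ x⬝ᵥAc x − x⬝ᵥzz − (x⬝ᵥzz − x'⬝ᵥzz)
    have e2 : x ⬝ᵥ Bc *ᵥ x = x ⬝ᵥ zz := by rw [hBx]
    have e3 : zz ⬝ᵥ x = x ⬝ᵥ zz := dotProduct_comm zz x
    have e4 : zz ⬝ᵥ x' = x' ⬝ᵥ zz := dotProduct_comm zz x'
    rw [show zz ⬝ᵥ Bc⁻¹ *ᵥ zz = zz ⬝ᵥ x from rfl, show zz ⬝ᵥ Ac⁻¹ *ᵥ zz = zz ⬝ᵥ x' from rfl,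
      e3, e4]
    linarith
  have hST : y ⬝ᵥ (A - A*P*Ac⁻¹*Pᵀ*A) *ᵥ y ≤ y ⬝ᵥ (A - A*P*Bc⁻¹*Pᵀ*A) *ᵥ y := by
    rw [Matrix.sub_mulVec, dotProduct_sub, Matrix.sub_mulVec, dotProduct_sub,
      hsand Bc⁻¹ y y, hsand Ac⁻¹ y y]
    have := hmono ((Pᵀ*A) *ᵥ y)
    linarith
  -- exact coarse projection
  have hAciT : (Ac⁻¹)ᵀ = Ac⁻¹ := by rw [Matrix.transpose_nonsing_inv, hAcT]
  have hRT : (1 - P*Ac⁻¹*Pᵀ*A)ᵀ = 1 - A*P*Ac⁻¹*Pᵀ := by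
    rw [Matrix.transpose_sub, Matrix.transpose_one, Matrix.transpose_mul, Matrix.transpose_mul,
      Matrix.transpose_mul, Matrix.transpose_transpose, hAt, hAciT]
    simp only [Matrix.mul_assoc]
  have hAcc : Ac * (Ac⁻¹ * (Pᵀ*A)) = Pᵀ*A := by
    rw [← Matrix.mul_assoc, Matrix.mul_nonsing_inv _ hAcdet, Matrix.one_mul]
  have hcanc : A*P*Ac⁻¹*Pᵀ*A*P*Ac⁻¹*Pᵀ*A = A*P*Ac⁻¹*Pᵀ*A := by
    calc A*P*Ac⁻¹*Pᵀ*A*P*Ac⁻¹*Pᵀ*A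
        = A*P*Ac⁻¹*((Pᵀ*A*P)*(Ac⁻¹*(Pᵀ*A))) := by simp only [Matrix.mul_assoc]
      _ = A*P*Ac⁻¹*(Pᵀ*A) := by rw [← hAc, hAcc]
      _ = A*P*Ac⁻¹*Pᵀ*A := by simp only [Matrix.mul_assoc]
  have hTR : (1 - P*Ac⁻¹*Pᵀ*A)ᵀ * A * (1 - P*Ac⁻¹*Pᵀ*A) = A - A*P*Ac⁻¹*Pᵀ*A := by
    rw [hRT]
    have expand : (1 - A*P*Ac⁻¹*Pᵀ) * A * (1 - P*Ac⁻¹*Pᵀ*A)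
        = A - A*P*Ac⁻¹*Pᵀ*A - A*P*Ac⁻¹*Pᵀ*A + A*P*Ac⁻¹*Pᵀ*A*P*Ac⁻¹*Pᵀ*A := by
      simp only [Matrix.mul_sub, Matrix.sub_mul, Matrix.mul_one, Matrix.one_mul,
        Matrix.mul_assoc]
      abel
    rw [expand, hcanc]
    abel
  have hty : y ⬝ᵥ (A - A*P*Ac⁻¹*Pᵀ*A) *ᵥ y
      = ((1 - P*Ac⁻¹*Pᵀ*A) *ᵥ y) ⬝ᵥ A *ᵥ ((1 - P*Ac⁻¹*Pᵀ*A) *ᵥ y) := by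
    rw [← hTR, dot3]
  -- u ⬝ᵥ A (R y) = s
  have huAy : u ⬝ᵥ A *ᵥ y = vv ⬝ᵥ A *ᵥ vv := by
    rw [hy, Matrix.mulVec_mulVec,
      show A * (1 - M⁻¹*A) = (1 - Mᵀ⁻¹*A)ᵀ * A * 1 from by
        rw [hYT, Matrix.mul_one, Matrix.mul_sub, Matrix.sub_mul, Matrix.mul_one, Matrix.one_mul,
          Matrix.mul_assoc],
      dot3, Matrix.one_mulVec, hvv]
  have huAR : u ⬝ᵥ A *ᵥ ((1 - P*Ac⁻¹*Pᵀ*A) *ᵥ y) = vv ⬝ᵥ A *ᵥ vv := by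
    rw [Matrix.mulVec_mulVec,
      show A * (1 - P*Ac⁻¹*Pᵀ*A) = A - A*P*Ac⁻¹*Pᵀ*A from by
        rw [Matrix.mul_sub, Matrix.mul_one]; simp only [Matrix.mul_assoc],
      Matrix.sub_mulVec, dotProduct_sub, hsand Ac⁻¹ u y,
      show (Pᵀ*A) *ᵥ u = 0 from by rw [← Matrix.mulVec_mulVec, hPAu],
      zero_dotProduct, sub_zero, huAy]
  -- final chain
  set s := vv ⬝ᵥ A *ᵥ vv with hsdef
  have hcs1 := cs_pd hA u ((1 - P*Ac⁻¹*Pᵀ*A) *ᵥ y)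
  rw [huAR] at hcs1
  have hta : s^2 ≤ a * (vv ⬝ᵥ A *ᵥ (E *ᵥ vv)) := by
    calc s^2 ≤ a * (((1 - P*Ac⁻¹*Pᵀ*A) *ᵥ y) ⬝ᵥ A *ᵥ ((1 - P*Ac⁻¹*Pᵀ*A) *ᵥ y)) := hcs1
      _ = a * (y ⬝ᵥ (A - A*P*Ac⁻¹*Pᵀ*A) *ᵥ y) := by rw [← hty]
      _ ≤ a * (y ⬝ᵥ (A - A*P*Bc⁻¹*Pᵀ*A) *ᵥ y) := by
          exact mul_le_mul_of_nonneg_left hST hapos.le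
      _ = a * (vv ⬝ᵥ A *ᵥ (E *ᵥ vv)) := by rw [← ht]
  have htcs : (1 - 1/KTG) * s ≤ vv ⬝ᵥ A *ᵥ (E *ᵥ vv) := by
    nlinarith [hta, hs_lb, hapos, hspos, hcase]
  have hcs2 := cs_pd hA vv (E *ᵥ vv)
  have htpos : 0 < vv ⬝ᵥ A *ᵥ (E *ᵥ vv) := lt_of_lt_of_le (mul_pos hcase hspos) htcs
  have hsqle : ((1 - 1/KTG) * s)^2 ≤ (vv ⬝ᵥ A *ᵥ (E *ᵥ vv))^2 :=
    pow_le_pow_left₀ (mul_pos hcase hspos).le htcs 2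
  have hqEv : (1 - 1/KTG)^2 * s ≤ (E *ᵥ vv) ⬝ᵥ A *ᵥ (E *ᵥ vv) := by
    nlinarith [hcs2, hsqle, hspos]
  have hEnorm : (1 - 1/KTG) * enorm A vv ≤ enorm A (E *ᵥ vv) := by
    have hsq : ((1 - 1/KTG) * enorm A vv)^2 ≤ (enorm A (E *ᵥ vv))^2 := by
      rw [mul_pow, enorm_sq hA.posSemidef, enorm_sq hA.posSemidef]
      exact hqEv
    have hnn1 : (0:ℝ) ≤ (1 - 1/KTG) * enorm A vv :=
      mul_nonneg hcase.le (Real.sqrt_nonneg _)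
    have hnn2 : (0:ℝ) ≤ enorm A (E *ᵥ vv) := Real.sqrt_nonneg _
    have h' := Real.sqrt_le_sqrt hsq
    rwa [Real.sqrt_sq hnn1, Real.sqrt_sq hnn2] at h'
  have hvpos : 0 < enorm A vv := Real.sqrt_pos.mpr hspos
  have hratio : 1 - 1/KTG ≤ enorm A (E *ᵥ vv) / enorm A vv := by
    rw [le_div_iff₀ hvpos]
    exact hEnorm
  exact hratio.trans (hnormE.2 ⟨vv, hvv0, rfl⟩)
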